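/- For q > 1, λ ∈ (0,1), and a point p ∈ R^d with coordinates p_j = f_j/(1-c) for j ∈ S and p_j = 0 for j ∉ S, where f ∈ R^d has positive coordinates with ||f||_q = 1, S ⊆ [d] nonempty, c ∈ [0,1) satisfying c/(1-c) = (Δ_S̄/Δ_S)^{1/q}·(λ^{q/(q-1)}/(1-λ^{q/(q-1)}))^{1/q} with Δ_S = Σ_{j∈S} f_j^q and Δ_S̄ = 1 - Δ_S > 0, Δ_S > 0: then ||p - f||_q - λ·||p||_q = (1 - λ^{q/(q-1)})^{(q-1)/q}·Δ_S̄^{1/q} - λ·Δ_S^{1/q}. -/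

import Mathlib

/-- Closed form of g(p) = ‖p-f‖_q - λ‖p‖_q for p with p_j = f_j/(1-c) on S and 0 off S. -/
theorem stmt5 (d : ℕ) (q lam c : ℝ) (hq : 1 < q) (hlam : lam ∈ Set.Ioo (0:ℝ) 1)
    (f : Fin d → ℝ) (hf : ∀ j, 0 < f j)
    (S : Finset (Fin d)) (hS : S.Nonempty)
    (ΔS ΔSc : ℝ)
    (hΔSdef : ΔS = ∑ j ∈ S, (f j) ^ q)
    (hnorm : ∑ j, (f j) ^ q = 1)
    (hΔScdef : ΔSc = 1 - ΔS) (hΔSpos : 0 < ΔS) (hΔScpos : 0 < ΔSc)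
    (hc : c ∈ Set.Ico (0:ℝ) 1)
    (hceq : c / (1-c) =
      (ΔSc / ΔS) ^ (1/q) * (lam ^ (q/(q-1)) / (1 - lam ^ (q/(q-1)))) ^ (1/q))
    (p : Fin d → ℝ) (hp : ∀ j, p j = if j ∈ S then f j / (1-c) else 0) :
    (∑ j, |p j - f j| ^ q) ^ (1/q) - lam * (∑ j, |p j| ^ q) ^ (1/q)
      = (1 - lam ^ (q/(q-1))) ^ ((q-1)/q) * ΔSc ^ (1/q) - lam * ΔS ^ (1/q) := by
  obtain ⟨hl0, hl1⟩ := hlam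
  obtain ⟨hc0, hc1⟩ := hc
  have hq0 : (0:ℝ) < q := by linarith
  have hqne : q ≠ 0 := ne_of_gt hq0
  have hq1 : (0:ℝ) < q - 1 := by linarith
  have h1c : (0:ℝ) < 1 - c := by linarith
  set μ : ℝ := lam ^ (q/(q-1)) with hμdef
  have he : (0:ℝ) < q/(q-1) := div_pos hq0 hq1
  have hμ0 : 0 < μ := Real.rpow_pos_of_pos hl0 _
  have hμ1 : μ < 1 := Real.rpow_lt_one hl0.le hl1 he
  have h1μ : (0:ℝ) < 1 - μ := by linarith
  set t : ℝ := c / (1-c) with htdef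
  have ht0 : 0 ≤ t := div_nonneg hc0 h1c.le
  -- t^q
  have hXnn : (0:ℝ) ≤ ΔSc / ΔS := (div_pos hΔScpos hΔSpos).le
  have hYnn : (0:ℝ) ≤ μ / (1-μ) := (div_pos hμ0 h1μ).le
  have htq : t ^ q = (ΔSc / ΔS) * (μ / (1-μ)) := by
    rw [hceq, ← Real.mul_rpow hXnn hYnn, ← Real.rpow_mul (mul_nonneg hXnn hYnn),
      one_div_mul_cancel hqne, Real.rpow_one]
  -- sum 1
  have hS1 : (∑ j, |p j - f j| ^ q) = t ^ q * ΔS + ΔSc := by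
    have hsplit := Finset.sum_add_sum_compl S (fun j => |p j - f j| ^ q)
    have h1 : (∑ j ∈ S, |p j - f j| ^ q) = t ^ q * ΔS := by
      rw [hΔSdef, Finset.mul_sum]
      refine Finset.sum_congr rfl (fun j hj => ?_)
      rw [hp j, if_pos hj]
      have : f j / (1-c) - f j = f j * t := by rw [htdef]; field_simp; ring
      rw [this, abs_of_nonneg (mul_nonneg (hf j).le ht0),
        Real.mul_rpow (hf j).le ht0]
      ring
    have h2 : (∑ j ∈ Sᶜ, |p j - f j| ^ q) = ΔSc := by
      have h3 : (∑ j ∈ Sᶜ, |p j - f j| ^ q) = ∑ j ∈ Sᶜ, (f j) ^ q := by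
        refine Finset.sum_congr rfl (fun j hj => ?_)
        rw [hp j, if_neg (Finset.mem_compl.mp hj)]
        rw [zero_sub, abs_neg, abs_of_nonneg (hf j).le]
      have h4 := Finset.sum_add_sum_compl S (fun j => (f j) ^ q)
      rw [h3, hΔScdef, ← hnorm, ← h4, ← hΔSdef]; ring
    rw [← hsplit, h1, h2]
  -- sum 2
  have hS2 : (∑ j, |p j| ^ q) = ΔS / (1-c) ^ q := by
    have hsplit := Finset.sum_add_sum_compl S (fun j => |p j| ^ q)
    have h1 : (∑ j ∈ S, |p j| ^ q) = ΔS / (1-c) ^ q := by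
      rw [hΔSdef, Finset.sum_div]
      refine Finset.sum_congr rfl (fun j hj => ?_)
      rw [hp j, if_pos hj, abs_of_nonneg (div_nonneg (hf j).le h1c.le),
        Real.div_rpow (hf j).le h1c.le]
    have h2 : (∑ j ∈ Sᶜ, |p j| ^ q) = 0 := by
      refine Finset.sum_eq_zero (fun j hj => ?_)
      rw [hp j, if_neg (Finset.mem_compl.mp hj), abs_zero, Real.zero_rpow hqne]
    rw [← hsplit, h1, h2, add_zero]
  -- first term
  have hA : (∑ j, |p j - f j| ^ q) ^ (1/q) = ΔSc ^ (1/q) / (1-μ) ^ (1/q) := by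
    rw [hS1, htq]
    have : ΔSc / ΔS * (μ / (1-μ)) * ΔS + ΔSc = ΔSc / (1-μ) := by
      field_simp; ring
    rw [this, Real.div_rpow hΔScpos.le h1μ.le]
  -- second term
  have hB : (∑ j, |p j| ^ q) ^ (1/q) = ΔS ^ (1/q) / (1-c) := by
    rw [hS2, Real.div_rpow hΔSpos.le (Real.rpow_nonneg h1c.le _),
      ← Real.rpow_mul h1c.le, mul_one_div, div_self hqne, Real.rpow_one]
  -- lam = μ^((q-1)/q)
  have hlameq : μ ^ ((q-1)/q) = lam := by
    rw [hμdef, ← Real.rpow_mul hl0.le]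
    have : q/(q-1) * ((q-1)/q) = 1 := by field_simp
    rw [this, Real.rpow_one]
  -- μ^(1/q) * μ^((q-1)/q) = μ
  have hμsplit : μ ^ ((q-1)/q) * μ ^ (1/q) = μ := by
    rw [← Real.rpow_add hμ0]
    have : (q-1)/q + 1/q = 1 := by field_simp; ring
    rw [this, Real.rpow_one]
  -- (1-μ)^((q-1)/q) = (1-μ)/(1-μ)^(1/q)
  have h1μsplit : (1-μ) ^ ((q-1)/q) = (1-μ) / (1-μ) ^ (1/q) := by
    have h : (q-1)/q = 1 - 1/q := by field_simp
    rw [h, Real.rpow_sub h1μ, Real.rpow_one]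
  -- 1/(1-c) = 1 + t
  have hinv : 1/(1-c) = 1 + t := by rw [htdef]; field_simp; ring
  -- lam * ΔS^(1/q) * t = μ * ΔSc^(1/q) / (1-μ)^(1/q)
  have hkey : lam * ΔS ^ (1/q) * t = μ * ΔSc ^ (1/q) / (1-μ) ^ (1/q) := by
    rw [← hlameq, hceq, Real.div_rpow hΔScpos.le hΔSpos.le,
      Real.div_rpow hμ0.le h1μ.le]
    have hΔSq : (0:ℝ) < ΔS ^ (1/q) := Real.rpow_pos_of_pos hΔSpos _
    have h1μq : (0:ℝ) < (1-μ) ^ (1/q) := Real.rpow_pos_of_pos h1μ _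
    have habs : ∀ a b X Y Z m : ℝ, X ≠ 0 → Z ≠ 0 → a * b = m →
        a * X * (Y / X * (b / Z)) = m * Y / Z := by
      intro a b X Y Z m hX hZ hab
      subst hab
      field_simp
    exact habs _ _ _ _ _ _ hΔSq.ne' h1μq.ne' hμsplit
  rw [hA, hB]
  have h1μq : (0:ℝ) < (1-μ) ^ (1/q) := Real.rpow_pos_of_pos h1μ _
  have : lam * (ΔS ^ (1/q) / (1-c)) = lam * ΔS ^ (1/q) * (1/(1-c)) := by ring
  rw [this, hinv, h1μsplit]
  have hexp : lam * ΔS ^ (1/q) * (1 + t)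
      = lam * ΔS ^ (1/q) + μ * ΔSc ^ (1/q) / (1-μ) ^ (1/q) := by
    rw [← hkey]; ring
  rw [hexp]
  field_simp
  ring
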